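/- Let f : ℝ → ℝ be continuous with f(s) > 0 for all s ≥ 0, and suppose ∫_{B₀}^∞ ds/f(s) < ∞. If B : [0,T) → ℝ is differentiable with B(0) = B₀ and B'(t) ≥ ε f(B(t)) for all t, where ε > 0, then B cannot exist globally: T ≤ (1/ε) ∫_{B₀}^∞ ds/f(s). In particular B blows up in finite time. -/

import Mathlib

open Set Filter MeasureTheory

/-- Osgood-type blow-up criterion for differential inequalities. -/
theorem stmt_0 (f : ℝ → ℝ) (hf : Continuous f) (hfpos : ∀ s, 0 ≤ s → 0 < f s)
    (B₀ : ℝ) (hB₀ : 0 ≤ B₀)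
    (hint : IntegrableOn (fun s => 1 / f s) (Ioi B₀))
    (T ε : ℝ) (hε : 0 < ε) (hT : 0 < T)
    (B : ℝ → ℝ) (hB0 : B 0 = B₀)
    (hderiv : ∀ t ∈ Ico (0:ℝ) T, HasDerivAt B (deriv B t) t ∧ ε * f (B t) ≤ deriv B t)
    (hBnn : ∀ t ∈ Ico (0:ℝ) T, 0 ≤ B t) :
    T ≤ (1 / ε) * ∫ s in Ioi B₀, 1 / f s := by
  set I : ℝ := ∫ s in Ioi B₀, 1 / f s with hI
  have hInonneg : 0 ≤ I := by
    apply setIntegral_nonneg measurableSet_Ioi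
    intro s hs
    exact le_of_lt (one_div_pos.mpr (hfpos s (le_of_lt (lt_of_le_of_lt hB₀ hs))))
  set g : ℝ → ℝ := fun x => ∫ s in B₀..x, 1 / f s with hg
  have key : ∀ t ∈ Ico (0:ℝ) T, ε * t ≤ I := by
    intro t ht
    obtain ⟨ht0, htT⟩ := ht
    have hsub : Icc (0:ℝ) t ⊆ Ico (0:ℝ) T := fun x hx => ⟨hx.1, lt_of_le_of_lt hx.2 htT⟩
    -- B is monotone on [0, t]
    have hBmono : MonotoneOn B (Icc 0 t) := by
      apply monotoneOn_of_deriv_nonneg (convex_Icc 0 t)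
      · intro x hx
        exact ((hderiv x (hsub hx)).1.continuousAt).continuousWithinAt
      · intro x hx
        rw [interior_Icc] at hx
        exact ((hderiv x (hsub (Ioo_subset_Icc_self hx))).1.differentiableAt).differentiableWithinAt
      · intro x hx
        rw [interior_Icc] at hx
        have hx' := hsub (Ioo_subset_Icc_self hx)
        have h1 := (hderiv x hx').2
        have h2 : 0 < f (B x) := hfpos _ (hBnn x hx')
        nlinarith
    have hBge : ∀ u ∈ Icc (0:ℝ) t, B₀ ≤ B u := by
      intro u hu
      have := hBmono (left_mem_Icc.mpr ht0) hu hu.1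
      rwa [hB0] at this
    -- interval integrability
    have hInt : ∀ u ∈ Icc (0:ℝ) t, IntervalIntegrable (fun s => 1 / f s) volume B₀ (B u) := by
      intro u hu
      rw [intervalIntegrable_iff]
      apply hint.mono_set
      rw [uIoc_of_le (hBge u hu)]
      exact Ioc_subset_Ioi_self
    -- g has derivative 1 / f (B u) at B u
    have hgderiv : ∀ u ∈ Icc (0:ℝ) t, HasDerivAt g (1 / f (B u)) (B u) := by
      intro u hu
      apply intervalIntegral.integral_hasDerivAt_right (hInt u hu)
      · exact ⟨Set.univ, univ_mem,
          ((measurable_const.div hf.measurable).aestronglyMeasurable)⟩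
      · have hne : f (B u) ≠ 0 := ne_of_gt (hfpos _ (hBnn u (hsub hu)))
        exact ContinuousAt.div continuousAt_const hf.continuousAt hne
    -- φ u = g (B u) - ε * u is monotone on [0, t]
    set φ : ℝ → ℝ := fun u => g (B u) - ε * u with hφ
    have hφderiv : ∀ u ∈ Icc (0:ℝ) t,
        HasDerivAt φ (deriv B u * (1 / f (B u)) - ε) u := by
      intro u hu
      have h1 : HasDerivAt (fun u => g (B u)) (deriv B u * (1 / f (B u))) u := by
        have := HasDerivAt.comp u (hgderiv u hu) (hderiv u (hsub hu)).1
        simpa [mul_comm, Function.comp_def] using this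
      have h2 : HasDerivAt (fun u : ℝ => ε * u) ε u := by
        simpa using (hasDerivAt_id u).const_mul ε
      exact h1.sub h2
    have hφmono : MonotoneOn φ (Icc 0 t) := by
      apply monotoneOn_of_deriv_nonneg (convex_Icc 0 t)
      · intro x hx
        exact ((hφderiv x hx).continuousAt).continuousWithinAt
      · intro x hx
        rw [interior_Icc] at hx
        exact ((hφderiv x (Ioo_subset_Icc_self hx)).differentiableAt).differentiableWithinAt
      · intro x hx
        rw [interior_Icc] at hx
        have hx' := Ioo_subset_Icc_self hx
        rw [(hφderiv x hx').deriv]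
        have h1 := (hderiv x (hsub hx')).2
        have h2 : 0 < f (B x) := hfpos _ (hBnn x (hsub hx'))
        rw [sub_nonneg, mul_one_div, le_div_iff₀ h2]
        linarith
    have hφ0 : φ 0 = 0 := by
      simp [hφ, hB0, hg]
    have hεt : ε * t ≤ g (B t) := by
      have := hφmono (left_mem_Icc.mpr ht0) (right_mem_Icc.mpr ht0) ht0
      rw [hφ0] at this
      simp only [hφ] at this
      linarith
    -- g (B t) ≤ I
    have hgle : g (B t) ≤ I := by
      have hle : B₀ ≤ B t := hBge t (right_mem_Icc.mpr ht0)
      rw [hg]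
      simp only
      rw [intervalIntegral.integral_of_le hle]
      apply setIntegral_mono_set hint
      · filter_upwards [ae_restrict_mem measurableSet_Ioi] with s hs
        exact le_of_lt (one_div_pos.mpr (hfpos s (le_of_lt (lt_of_le_of_lt hB₀ hs))))
      · exact ae_of_all _ Ioc_subset_Ioi_self
    linarith
  -- conclude
  have hmain : ε * T ≤ I := by
    by_contra h
    push_neg at h
    have hdiv : I / ε < T := (div_lt_iff₀ hε).mpr (by linarith [mul_comm ε T])
    set t := (I / ε + T) / 2 with htdef
    have ht0 : 0 ≤ t := by positivity
    have htT : t < T := by rw [htdef]; linarith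
    have hIt : I / ε < t := by rw [htdef]; linarith
    have h1 : I < t * ε := (div_lt_iff₀ hε).mp hIt
    have h2 := key t ⟨ht0, htT⟩
    linarith [mul_comm ε t]
  rw [one_div, inv_mul_eq_div]
  exact (le_div_iff₀ hε).mpr (by linarith [mul_comm ε T])
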